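/- arXiv:1507.00951 — 2 statements merged into one kernel-verified Lean document; each statement's English description precedes it below -/
import Mathlib

section
/- Let F be a field. Then the 8×8 matrix J₈ is invertible and alternating (J₈ᵀ = −J₈ and all diagonal entries of J₈ are zero), and the subspace H of F⁸ spanned by the four standard basis vectors e₁₁₁, e₁₂₂, e₂₁₂, e₂₂₁ is a Lagrangian subspace for the symplectic form ψ represented by J₈: H has dimension 4 (half of 8) and vᵀ · J₈ · w = 0 for all v, w ∈ H. -/
open Matrix
open scoped Kronecker

/-- The matrix of the standard symplectic form on `F²`. -/
def J2 (F : Type*) [CommRing F] : Matrix (Fin 2) (Fin 2) F := !![0, 1; -1, 0]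

/-- The matrix `J₈ = J₂ ⊗ J₂ ⊗ J₂` of the symplectic form `ψ = ψ₁ ⊗ ψ₂ ⊗ ψ₃` on
`F⁸ ≅ F² ⊗ F² ⊗ F²`, with basis `e_{ijk} = e_i ⊗ e_j ⊗ e_k` indexed by
`(Fin 2 × Fin 2) × Fin 2`. -/
def J8 (F : Type*) [CommRing F] : Matrix ((Fin 2 × Fin 2) × Fin 2) ((Fin 2 × Fin 2) × Fin 2) F :=
  (J2 F ⊗ₖ J2 F) ⊗ₖ J2 F

/-- The standard basis vector `e_{ijk}` of `F⁸` (indices written `1`, `2` in the paper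
correspond to `0`, `1` in `Fin 2`). -/
def stdVec (F : Type*) [CommRing F] (i j k : Fin 2) : (Fin 2 × Fin 2) × Fin 2 → F :=
  Pi.single ((i, j), k) 1

section Aux

variable (F : Type) [Field F]

lemma neg_kron {l m n p : Type*} (A : Matrix l m F) (B : Matrix n p F) :
    (-A) ⊗ₖ B = -(A ⊗ₖ B) := by
  ext ⟨i, j⟩ ⟨k, l⟩
  simp [Matrix.kroneckerMap_apply]

lemma kron_neg {l m n p : Type*} (A : Matrix l m F) (B : Matrix n p F) :
    A ⊗ₖ (-B) = -(A ⊗ₖ B) := by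
  ext ⟨i, j⟩ ⟨k, l⟩
  simp [Matrix.kroneckerMap_apply]

lemma J2_mul_J2 : J2 F * J2 F = -1 := by
  simp only [J2]
  ext i j
  fin_cases i <;> fin_cases j <;>
    simp [Matrix.mul_apply, Fin.sum_univ_succ, Matrix.one_apply]

lemma J2_transpose : (J2 F)ᵀ = -(J2 F) := by
  simp only [J2]
  ext i j
  fin_cases i <;> fin_cases j <;> simp

lemma J8_mul_J8 : J8 F * J8 F = -1 := by
  rw [J8, ← Matrix.mul_kronecker_mul, ← Matrix.mul_kronecker_mul, J2_mul_J2]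
  simp [neg_kron, kron_neg, Matrix.one_kronecker_one]

lemma stdVec_pair (i j k i' j' k' : Fin 2) :
    stdVec F i j k ⬝ᵥ (J8 F *ᵥ stdVec F i' j' k') =
      J2 F i i' * J2 F j j' * J2 F k k' := by
  simp [stdVec, Matrix.mulVec_single, single_dotProduct, J8,
    Matrix.kroneckerMap_apply, mul_assoc]

end Aux

/-- Over any field `F`, the matrix `J₈` is invertible and alternating
(`J₈ᵀ = -J₈` with zero diagonal), and the span `H` of `e₁₁₁, e₁₂₂, e₂₁₂, e₂₂₁` is a
Lagrangian subspace of `(F⁸, ψ)`: it has dimension `4 = 8/2` and `vᵀ J₈ w = 0` for all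
`v, w ∈ H`. -/
theorem J8_alternating_and_lagrangian (F : Type) [Field F] :
    IsUnit (J8 F) ∧ (J8 F)ᵀ = -(J8 F) ∧ (∀ i, J8 F i i = 0) ∧
    Module.finrank F
      (Submodule.span F {stdVec F 0 0 0, stdVec F 0 1 1, stdVec F 1 0 1, stdVec F 1 1 0}) = 4 ∧
    ∀ v ∈ Submodule.span F
        ({stdVec F 0 0 0, stdVec F 0 1 1, stdVec F 1 0 1, stdVec F 1 1 0} :
          Set ((Fin 2 × Fin 2) × Fin 2 → F)),
      ∀ w ∈ Submodule.span F
        ({stdVec F 0 0 0, stdVec F 0 1 1, stdVec F 1 0 1, stdVec F 1 1 0} :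
          Set ((Fin 2 × Fin 2) × Fin 2 → F)),
        v ⬝ᵥ (J8 F *ᵥ w) = 0 := by
  refine ⟨?_, ?_, ?_, ?_, ?_⟩
  · exact ⟨⟨J8 F, -(J8 F), by rw [mul_neg, J8_mul_J8, neg_neg],
      by rw [neg_mul, J8_mul_J8, neg_neg]⟩, rfl⟩
  · rw [J8, ← Matrix.kroneckerMap_transpose, ← Matrix.kroneckerMap_transpose,
      J2_transpose]
    simp [neg_kron, kron_neg]
  · rintro ⟨⟨a, b⟩, c⟩
    have hc : J2 F c c = 0 := by fin_cases c <;> simp [J2]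
    simp [J8, Matrix.kroneckerMap_apply, hc]
  · have hli : LinearIndependent F
        (fun x : Fin 4 => (Pi.basisFun F ((Fin 2 × Fin 2) × Fin 2))
          ((![((0,0),0), ((0,1),1), ((1,0),1), ((1,1),0)] :
            Fin 4 → (Fin 2 × Fin 2) × Fin 2) x)) :=
      (Pi.basisFun F _).linearIndependent.comp _ (by decide)
    have hset : ({stdVec F 0 0 0, stdVec F 0 1 1, stdVec F 1 0 1, stdVec F 1 1 0} :
        Set ((Fin 2 × Fin 2) × Fin 2 → F)) =
        Set.range (fun x : Fin 4 => (Pi.basisFun F ((Fin 2 × Fin 2) × Fin 2))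
          ((![((0,0),0), ((0,1),1), ((1,0),1), ((1,1),0)] :
            Fin 4 → (Fin 2 × Fin 2) × Fin 2) x)) := by
      ext v
      simp only [Set.mem_insert_iff, Set.mem_singleton_iff, Set.mem_range,
        Pi.basisFun_apply, stdVec]
      constructor
      · rintro (h | h | h | h)
        · exact ⟨0, by simp [h]⟩
        · exact ⟨1, by simp [h]⟩
        · exact ⟨2, by simp [h]⟩
        · exact ⟨3, by simp [h]⟩
      · rintro ⟨x, rfl⟩
        fin_cases x <;> simp
    rw [hset, finrank_span_eq_card hli, Fintype.card_fin]
  · intro v hv w hw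
    induction hv using Submodule.span_induction with
    | mem v hvmem =>
      induction hw using Submodule.span_induction with
      | mem w hwmem =>
        simp only [Set.mem_insert_iff, Set.mem_singleton_iff] at hvmem hwmem
        rcases hvmem with rfl | rfl | rfl | rfl <;>
          rcases hwmem with rfl | rfl | rfl | rfl <;>
          · rw [stdVec_pair]; norm_num [J2]
      | zero => simp
      | add w₁ w₂ _ _ h1 h2 => rw [Matrix.mulVec_add, dotProduct_add, h1, h2, add_zero]
      | smul a w₁ _ h1 => rw [Matrix.mulVec_smul, dotProduct_smul, h1, smul_zero]
    | zero => simp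
    | add v₁ v₂ _ _ h1 h2 => rw [add_dotProduct, h1, h2, add_zero]
    | smul a v₁ _ h1 => rw [smul_dotProduct, h1, smul_zero]
end

section
/- Let F be a field of characteristic different from 2. The set of 8×8 matrices t over F that can be written as t = a ⊗ b ⊗ c with a, b, c invertible 2×2 matrices over F and that fix each of the four standard basis vectors e₁₁₁, e₁₂₂, e₂₁₂, e₂₂₁ (i.e. t · e = e for e ∈ {e₁₁₁, e₁₂₂, e₂₁₂, e₂₂₁}) is exactly {I₈, D}, where I₈ is the identity matrix and D = diag(1, −1, −1, 1, −1, 1, 1, −1); in particular this stabilizer has exactly two elements. -/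
open Matrix
open scoped Kronecker

/-- The diagonal matrix `D = diag(1, −1, −1, 1, −1, 1, 1, −1)`: it multiplies `e_{ijk}` by
`+1` when `i + j + k` is odd (in the paper's `{1,2}`-valued indices, i.e. when the sum of
the corresponding `Fin 2` values is even) and by `−1` otherwise. -/
def signMatrix (F : Type*) [CommRing F] :
    Matrix ((Fin 2 × Fin 2) × Fin 2) ((Fin 2 × Fin 2) × Fin 2) F :=
  Matrix.diagonal fun p =>
    if (p.1.1.val + p.1.2.val + p.2.val) % 2 = 0 then 1 else -1

/-- `signMatrix` is the triple Kronecker product of `diag(1,-1)` with itself. -/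
lemma signMatrix_eq_kron (F : Type) [Field F] :
    signMatrix F =
      ((Matrix.diagonal ![1, -1] : Matrix (Fin 2) (Fin 2) F) ⊗ₖ Matrix.diagonal ![1, -1]) ⊗ₖ
        Matrix.diagonal ![1, -1] := by
  simp only [Matrix.diagonal_kronecker_diagonal, signMatrix]
  refine congrArg Matrix.diagonal (funext fun p => ?_)
  obtain ⟨⟨i, j⟩, k⟩ := p
  fin_cases i <;> fin_cases j <;> fin_cases k <;> norm_num

/-- Let `F` be a field of characteristic `≠ 2`.  The set of `8×8` matrices
of the form `t = a ⊗ b ⊗ c` with `a, b, c` invertible `2×2` matrices over `F` fixing each of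
`e₁₁₁, e₁₂₂, e₂₁₂, e₂₂₁` is exactly `{1, D}` with `D = diag(1, −1, −1, 1, −1, 1, 1, −1)`;
in particular this stabilizer has exactly two elements. -/
theorem kronecker_stabilizer_eq_pair (F : Type) [Field F] (h2 : (2 : F) ≠ 0) :
    {t : Matrix ((Fin 2 × Fin 2) × Fin 2) ((Fin 2 × Fin 2) × Fin 2) F |
        (∃ a b c : Matrix (Fin 2) (Fin 2) F,
          IsUnit a.det ∧ IsUnit b.det ∧ IsUnit c.det ∧ t = (a ⊗ₖ b) ⊗ₖ c) ∧
        t *ᵥ stdVec F 0 0 0 = stdVec F 0 0 0 ∧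
        t *ᵥ stdVec F 0 1 1 = stdVec F 0 1 1 ∧
        t *ᵥ stdVec F 1 0 1 = stdVec F 1 0 1 ∧
        t *ᵥ stdVec F 1 1 0 = stdVec F 1 1 0} = {1, signMatrix F} ∧
    signMatrix F ≠ 1 := by
  have hD1 : signMatrix F ≠ 1 := by
    intro h
    have := congrFun (congrFun h (((0 : Fin 2), (0 : Fin 2)), (1 : Fin 2)))
      (((0 : Fin 2), (0 : Fin 2)), (1 : Fin 2))
    simp [signMatrix, Matrix.one_apply] at this
    exact h2 (by linear_combination -this)
  refine ⟨?_, hD1⟩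
  ext t
  simp only [Set.mem_setOf_eq, Set.mem_insert_iff, Set.mem_singleton_iff]
  constructor
  · rintro ⟨⟨a, b, c, -, -, -, rfl⟩, h1, h2', h3, h4⟩
    have E : ∀ (i j k i' j' k' : Fin 2),
        (((a ⊗ₖ b) ⊗ₖ c) *ᵥ stdVec F i' j' k') = stdVec F i' j' k' →
        a i i' * b j j' * c k k' =
          if (((i, j), k) : (Fin 2 × Fin 2) × Fin 2) = ((i', j'), k') then 1 else 0 := by
      intro i j k i' j' k' h
      have := congrFun h ((i, j), k)
      simpa [stdVec, Matrix.mulVec_single, Pi.single_apply, Matrix.kroneckerMap_apply] using this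
    have e000 : a 0 0 * b 0 0 * c 0 0 = 1 := by simpa using E 0 0 0 0 0 0 h1
    have e011 : a 0 0 * b 1 1 * c 1 1 = 1 := by simpa using E 0 1 1 0 1 1 h2'
    have e101 : a 1 1 * b 0 0 * c 1 1 = 1 := by simpa using E 1 0 1 1 0 1 h3
    have e110 : a 1 1 * b 1 1 * c 0 0 = 1 := by simpa using E 1 1 0 1 1 0 h4
    have z1 : a 1 0 * b 0 0 * c 0 0 = 0 := by
      have := E 1 0 0 0 0 0 h1
      rw [if_neg (by decide)] at this
      exact this
    have z2 : a 0 0 * b 1 0 * c 0 0 = 0 := by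
      have := E 0 1 0 0 0 0 h1
      rw [if_neg (by decide)] at this
      exact this
    have z3 : a 0 0 * b 0 0 * c 1 0 = 0 := by
      have := E 0 0 1 0 0 0 h1
      rw [if_neg (by decide)] at this
      exact this
    have z4 : a 0 0 * b 0 1 * c 1 1 = 0 := by
      have := E 0 0 1 0 1 1 h2'
      rw [if_neg (by decide)] at this
      exact this
    have z5 : a 0 0 * b 1 1 * c 0 1 = 0 := by
      have := E 0 1 0 0 1 1 h2'
      rw [if_neg (by decide)] at this
      exact this
    have z6 : a 0 1 * b 0 0 * c 1 1 = 0 := by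
      have := E 0 0 1 1 0 1 h3
      rw [if_neg (by decide)] at this
      exact this
    have ha10 : a 1 0 = 0 := by linear_combination a 0 0 * z1 - a 1 0 * e000
    have hb10 : b 1 0 = 0 := by linear_combination b 0 0 * z2 - b 1 0 * e000
    have hc10 : c 1 0 = 0 := by linear_combination c 0 0 * z3 - c 1 0 * e000
    have hb01 : b 0 1 = 0 := by linear_combination b 1 1 * z4 - b 0 1 * e011
    have hc01 : c 0 1 = 0 := by linear_combination c 1 1 * z5 - c 0 1 * e011
    have ha01 : a 0 1 = 0 := by linear_combination a 1 1 * z6 - a 0 1 * e101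
    set ε := a 1 1 * b 1 1 * c 1 1 with hε
    have hsq : (ε - 1) * (ε + 1) = 0 := by
      linear_combination (a 0 0 * b 1 1 * c 1 1) * (a 1 1 * b 0 0 * c 1 1) * e110 +
        (a 0 0 * b 1 1 * c 1 1) * e101 + e011 - ε ^ 2 * e000
    have h100 : a 1 1 * b 0 0 * c 0 0 = ε := by
      linear_combination ε * e000 - (a 1 1 * b 0 0 * c 0 0) * e011
    have h010 : a 0 0 * b 1 1 * c 0 0 = ε := by
      linear_combination ε * e000 - (a 0 0 * b 1 1 * c 0 0) * e101
    have h001 : a 0 0 * b 0 0 * c 1 1 = ε := by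
      linear_combination ε * e000 - (a 0 0 * b 0 0 * c 1 1) * e110
    have haD : a = Matrix.diagonal ![a 0 0, a 1 1] := by
      ext i j
      fin_cases i <;> fin_cases j <;> simp [Matrix.diagonal_apply, ha01, ha10]
    have hbD : b = Matrix.diagonal ![b 0 0, b 1 1] := by
      ext i j
      fin_cases i <;> fin_cases j <;> simp [Matrix.diagonal_apply, hb01, hb10]
    have hcD : c = Matrix.diagonal ![c 0 0, c 1 1] := by
      ext i j
      fin_cases i <;> fin_cases j <;> simp [Matrix.diagonal_apply, hc01, hc10]
    rw [haD, hbD, hcD]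
    simp only [Matrix.diagonal_kronecker_diagonal]
    rcases mul_eq_zero.1 hsq with h | h
    · left
      rw [← Matrix.diagonal_one]
      refine congrArg Matrix.diagonal (funext fun p => ?_)
      have hε1 : ε = 1 := by linear_combination h
      obtain ⟨⟨i, j⟩, k⟩ := p
      fin_cases i <;> fin_cases j <;> fin_cases k <;>
        simp only [Fin.mk_zero, Fin.mk_one, Matrix.cons_val_zero, Matrix.cons_val_one,
          Matrix.head_cons, Pi.one_apply]
      all_goals first
          | linear_combination e000 | linear_combination e011
          | linear_combination e101 | linear_combination e110
          | linear_combination h100 + hε1 | linear_combination h010 + hε1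
          | linear_combination h001 + hε1 | linear_combination hε1
    · right
      rw [signMatrix]
      refine congrArg Matrix.diagonal (funext fun p => ?_)
      have hε1 : ε = -1 := by linear_combination h
      obtain ⟨⟨i, j⟩, k⟩ := p
      fin_cases i <;> fin_cases j <;> fin_cases k <;>
        simp only [Fin.mk_zero, Fin.mk_one, Matrix.cons_val_zero, Matrix.cons_val_one,
          Matrix.head_cons] <;>
        norm_num
      all_goals first
          | linear_combination e000 | linear_combination e011
          | linear_combination e101 | linear_combination e110
          | linear_combination h100 | linear_combination h010
          | linear_combination h001 | linear_combination hε1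
          | linear_combination h100 + hε1 | linear_combination h010 + hε1
          | linear_combination h001 + hε1
  · rintro (rfl | rfl)
    · exact ⟨⟨1, 1, 1, by simp, by simp, by simp,
        by rw [Matrix.one_kronecker_one, Matrix.one_kronecker_one]⟩,
        by simp, by simp, by simp, by simp⟩
    · refine ⟨⟨Matrix.diagonal ![1, -1], Matrix.diagonal ![1, -1], Matrix.diagonal ![1, -1],
        ?_, ?_, ?_, signMatrix_eq_kron F⟩, ?_, ?_, ?_, ?_⟩ <;>
        first
          | simp [Matrix.det_fin_two]
          | (rw [signMatrix, stdVec, Matrix.diagonal_mulVec_single]; norm_num)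
end
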